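/- If M is an uncountable closed subset of the unit interval [0,1], then there exists a continuous surjection from M (with the subspace topology) onto [0,1]. -/

import Mathlib

open Filter Topology

noncomputable def digitSum (r : ℝ) : ℕ → ℝ
  | 0 => 0
  | n + 1 => if digitSum r n + (2:ℝ)⁻¹ ^ (n + 1) ≤ r then digitSum r n + (2:ℝ)⁻¹ ^ (n + 1)
      else digitSum r n

lemma digitSum_invariant {r : ℝ} (h0 : 0 ≤ r) (h1 : r ≤ 1) (n : ℕ) :
    digitSum r n ≤ r ∧ r ≤ digitSum r n + (2:ℝ)⁻¹ ^ n := by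
  induction n with
  | zero => simpa [digitSum] using ⟨h0, h1⟩
  | succ n ih =>
    by_cases h : digitSum r n + (2:ℝ)⁻¹ ^ (n + 1) ≤ r
    · rw [digitSum, if_pos h]
      refine ⟨h, ?_⟩
      have e : (2:ℝ)⁻¹ ^ n = (2:ℝ)⁻¹ ^ (n+1) + (2:ℝ)⁻¹ ^ (n+1) := by ring
      nlinarith [ih.2]
    · rw [digitSum, if_neg h]
      exact ⟨ih.1, by linarith [not_le.1 h]⟩

noncomputable def cantorMap (x : ℕ → Bool) : ℝ :=
  ∑' n, if x n then (2:ℝ)⁻¹ ^ (n + 1) else 0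

lemma summable_halfpow : Summable (fun n : ℕ => (2:ℝ)⁻¹ ^ (n + 1)) := by
  simpa [pow_succ'] using
    (summable_geometric_of_lt_one (by norm_num : (0:ℝ) ≤ 2⁻¹) (by norm_num)).mul_left (2:ℝ)⁻¹

lemma tsum_halfpow : ∑' n : ℕ, (2:ℝ)⁻¹ ^ (n + 1) = 1 := by
  have h := tsum_geometric_of_lt_one (by norm_num : (0:ℝ) ≤ 2⁻¹) (by norm_num : (2:ℝ)⁻¹ < 1)
  calc ∑' n : ℕ, (2:ℝ)⁻¹ ^ (n + 1) = ∑' n : ℕ, (2:ℝ)⁻¹ * (2:ℝ)⁻¹ ^ n := by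
        simp [pow_succ']
    _ = (2:ℝ)⁻¹ * ∑' n : ℕ, (2:ℝ)⁻¹ ^ n := tsum_mul_left
    _ = 1 := by rw [h]; norm_num

lemma cantor_summable (x : ℕ → Bool) :
    Summable (fun n => if x n then (2:ℝ)⁻¹ ^ (n + 1) else 0) := by
  apply Summable.of_nonneg_of_le (fun n => by split <;> positivity)
    (fun n => ?_) summable_halfpow
  split <;> first | exact le_rfl | positivity

lemma cantorMap_mem (x : ℕ → Bool) : cantorMap x ∈ Set.Icc (0:ℝ) 1 := by
  constructor
  · exact tsum_nonneg fun n => by split <;> positivity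
  · calc cantorMap x ≤ ∑' n : ℕ, (2:ℝ)⁻¹ ^ (n + 1) := by
          apply Summable.tsum_le_tsum _ (cantor_summable x) summable_halfpow
          intro n
          split <;> first | exact le_rfl | positivity
      _ = 1 := tsum_halfpow

lemma continuous_cantorMap : Continuous cantorMap := by
  refine continuous_tsum (u := fun n => (2:ℝ)⁻¹ ^ (n + 1)) (fun i => ?_) summable_halfpow
    (fun n x => ?_)
  · exact (continuous_of_discreteTopology
      (f := fun b : Bool => if b then (2:ℝ)⁻¹ ^ (i+1) else 0)).comp (continuous_apply i)
  · rw [Real.norm_eq_abs, abs_of_nonneg (by split <;> positivity)]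
    split <;> first | exact le_rfl | positivity

lemma cantorMap_surj {r : ℝ} (h0 : 0 ≤ r) (h1 : r ≤ 1) :
    ∃ x : ℕ → Bool, cantorMap x = r := by
  refine ⟨fun n => decide (digitSum r n + (2:ℝ)⁻¹ ^ (n + 1) ≤ r), ?_⟩
  set x : ℕ → Bool := fun n => decide (digitSum r n + (2:ℝ)⁻¹ ^ (n + 1) ≤ r) with hx
  have hpart : ∀ n, digitSum r n = ∑ i ∈ Finset.range n, if x i then (2:ℝ)⁻¹ ^ (i+1) else 0 := by
    intro n
    induction n with
    | zero => simp [digitSum]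
    | succ n ih =>
      rw [Finset.sum_range_succ, ← ih]
      by_cases h : digitSum r n + (2:ℝ)⁻¹ ^ (n + 1) ≤ r
      · rw [digitSum, if_pos h, if_pos (by simpa [hx] using h)]
      · rw [digitSum, if_neg h, if_neg (by simpa [hx] using h), add_zero]
  have htend : Tendsto (digitSum r) atTop (𝓝 r) := by
    have hgeo : Tendsto (fun n => r - (2:ℝ)⁻¹ ^ n) atTop (𝓝 (r - 0)) :=
      tendsto_const_nhds.sub (tendsto_pow_atTop_nhds_zero_of_lt_one (by norm_num) (by norm_num))
    rw [sub_zero] at hgeo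
    refine tendsto_of_tendsto_of_tendsto_of_le_of_le hgeo tendsto_const_nhds
      (fun n => ?_) (fun n => (digitSum_invariant h0 h1 n).1)
    linarith [(digitSum_invariant h0 h1 n).2]
  have hsum := (cantor_summable x).hasSum.tendsto_sum_nat
  have : Tendsto (digitSum r) atTop (𝓝 (cantorMap x)) := by
    simpa only [← hpart, cantorMap] using hsum
  exact tendsto_nhds_unique this htend

/-- If `M` is an uncountable closed subset of `[0,1]`, then there is a continuous
surjection from `M` (with the subspace topology) onto `[0,1]`. -/
theorem continuous_surjection_onto_unitInterval (M : Set ℝ)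
    (hsub : M ⊆ Set.Icc 0 1) (hclosed : IsClosed M) (hunc : ¬ M.Countable) :
    ∃ f : M → Set.Icc (0:ℝ) 1, Continuous f ∧ Function.Surjective f := by
  obtain ⟨j, hjM, hjc, hji⟩ := hclosed.exists_nat_bool_injection_of_not_countable hunc
  have hemb : IsClosedEmbedding j := hjc.isClosedEmbedding hji
  let e : (ℕ → Bool) ≃ₜ Set.range j := hemb.toIsEmbedding.toHomeomorph
  -- the subset of M corresponding to range j
  let s : Set M := Subtype.val ⁻¹' Set.range j
  have hsClosed : IsClosed s :=
    (hemb.isClosed_range).preimage continuous_subtype_val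
  -- continuous map on s with values in [0,1]
  let g0 : C(s, ℝ) :=
    ⟨fun z => cantorMap (e.symm ⟨(z : M), z.2⟩),
      continuous_cantorMap.comp (e.symm.continuous.comp
        (Continuous.subtype_mk (continuous_subtype_val.comp continuous_subtype_val) _))⟩
  have hg0 : ∀ z, g0 z ∈ Set.Icc (0:ℝ) 1 := fun z => cantorMap_mem _
  obtain ⟨g, hg, hgr⟩ := ContinuousMap.exists_restrict_eq_forall_mem_of_closed g0 hg0
    ⟨0, by norm_num⟩ hsClosed
  refine ⟨fun m => ⟨g m, hg m⟩, (map_continuous g).subtype_mk _, ?_⟩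
  rintro ⟨t, ht0, ht1⟩
  obtain ⟨x, hxt⟩ := cantorMap_surj ht0 ht1
  refine ⟨⟨j x, hjM ⟨x, rfl⟩⟩, ?_⟩
  have hmem : (⟨j x, hjM ⟨x, rfl⟩⟩ : M) ∈ s := ⟨x, rfl⟩
  have := congrFun (congrArg DFunLike.coe hgr) ⟨⟨j x, hjM ⟨x, rfl⟩⟩, hmem⟩
  simp only [ContinuousMap.restrict_apply] at this
  have he : e.symm ⟨(⟨j x, hjM ⟨x, rfl⟩⟩ : M), hmem⟩ = x := by
    apply e.injective
    simp [e]
  ext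
  simp only [this, g0, he, hxt, ContinuousMap.coe_mk]
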